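/- If M is a circular-ones matrix with a circular-ones cyclic ordering of its columns, c is a column, and M' is obtained by complementing every row of M that has a 1 in column c and then deleting column c, then the induced linear ordering of the remaining columns (cutting the cyclic order at c) is a consecutive-ones ordering of M'. -/

import Mathlib

/-- `σ` is a circular-ones ordering of the columns of `M`. -/
def IsCircularOnesOrdering {ρ γ : Type*} {n : ℕ} (σ : γ ≃ Fin n) (M : ρ → γ → Prop) : Prop :=
  ∀ r, ∃ a l : ℕ, ∀ c, M r c ↔ ∃ j < l, (σ c : ℕ) = (a + j) % n

private lemma mod_cancel_aux {n t v w : ℕ} (h : (v + t) % n = (w + t) % n) :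
    v % n = w % n :=
  Nat.ModEq.add_right_cancel' t h

private lemma exists_rep_aux {n : ℕ} (hn : 0 < n) (b v : ℕ) (hv : v < n) :
    ∃ j < n, v = (b + j) % n := by
  refine ⟨(v + n - b % n) % n, Nat.mod_lt _ hn, ?_⟩
  have h1 : b % n < n := Nat.mod_lt _ hn
  have h2 : b % n ≤ b := Nat.mod_le _ _
  have h3 : b - b % n = n * (b / n) := by
    have := Nat.div_add_mod b n; omega
  have key : b + (v + n - b % n) = v + n * (b / n) + n := by omega
  have : (b + (v + n - b % n) % n) % n = v := by
    rw [Nat.add_mod_mod, key, Nat.add_mod_right, Nat.add_mul_mod_self_left,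
      Nat.mod_eq_of_lt hv]
  exact this.symm

private lemma uniq_rep_aux {n : ℕ} (b j₁ j₂ : ℕ) (h₁ : j₁ < n) (h₂ : j₂ < n)
    (h : (b + j₁) % n = (b + j₂) % n) : j₁ = j₂ := by
  have h' : j₁ % n = j₂ % n := Nat.ModEq.add_left_cancel' b h
  rwa [Nat.mod_eq_of_lt h₁, Nat.mod_eq_of_lt h₂] at h'

private lemma arc_compl_aux {n : ℕ} (hn : 0 < n) (b m : ℕ) (hm : m ≤ n) (v : ℕ) (hv : v < n) :
    (¬ ∃ j < m, v = (b + j) % n) ↔ ∃ j < n - m, v = (b + m + j) % n := by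
  constructor
  · intro h
    obtain ⟨j, hj, hvj⟩ := exists_rep_aux hn b v hv
    have hjm : m ≤ j := by
      by_contra h'
      exact h ⟨j, by omega, hvj⟩
    refine ⟨j - m, by omega, ?_⟩
    rw [hvj]; congr 1; omega
  · rintro ⟨j, hj, rfl⟩ ⟨j', hj', h'⟩
    have e : (b + j') % n = (b + (m + j)) % n := by rw [← h']; congr 1; omega
    have := uniq_rep_aux b j' (m + j) (by omega) (by omega) e
    omega

private lemma arc_min_aux {n : ℕ} (hn : 0 < n) (a l v : ℕ) (hv : v < n) :
    (∃ j < l, v = (a + j) % n) ↔ ∃ j < min l n, v = (a + j) % n := by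
  constructor
  · rintro ⟨j, hj, rfl⟩
    rcases le_or_gt l n with h | h
    · exact ⟨j, by omega, rfl⟩
    · obtain ⟨j', hj', h'⟩ := exists_rep_aux hn a _ hv
      exact ⟨j', by omega, h'⟩
  · rintro ⟨j, hj, h⟩; exact ⟨j, by omega, h⟩

private lemma arc_cut_aux {n : ℕ} (hn : 0 < n) (b m k : ℕ) (hk : k < n)
    (hkS : ¬ ∃ j < m, k = (b + j) % n) :
    ∃ a, ∀ v < n, ((∃ j < m, v = (b + j) % n) ↔
      (a ≤ (v + (n - 1) - k) % n ∧ (v + (n - 1) - k) % n < a + m)) := by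
  set t := n - 1 - k with ht
  set a := (b + t) % n with ha
  have han : a < n := Nat.mod_lt _ hn
  have hbound : a + m ≤ n := by
    by_contra h
    push_neg at h
    apply hkS
    refine ⟨n - 1 - a, by omega, ?_⟩
    have e2 : (b + (n - 1 - a) + t) % n = (n - 1) % n := by
      have e : b + (n - 1 - a) + t = (b + t) + (n - 1 - a) := by ring
      rw [e, ← Nat.mod_add_mod, ← ha, show a + (n - 1 - a) = n - 1 by omega]
    have e1 : (k + t) % n = (n - 1) % n := by congr 1; omega
    have := mod_cancel_aux (e1.trans e2.symm)
    rwa [Nat.mod_eq_of_lt hk] at this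
  refine ⟨a, fun v hv => ?_⟩
  have hvt : v + (n - 1) - k = v + t := by omega
  rw [hvt]
  constructor
  · rintro ⟨j, hj, rfl⟩
    have e : ((b + j) % n + t) % n = a + j := by
      rw [Nat.mod_add_mod, show b + j + t = (b + t) + j by ring, ← Nat.mod_add_mod, ← ha,
        Nat.mod_eq_of_lt (by omega)]
    rw [e]
    omega
  · rintro ⟨h1, h2⟩
    refine ⟨(v + t) % n - a, by omega, ?_⟩
    have e : (b + ((v + t) % n - a) + t) % n = (v + t) % n := by
      rw [show b + ((v + t) % n - a) + t = (b + t) + ((v + t) % n - a) by ring,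
        ← Nat.mod_add_mod, ← ha, Nat.mod_eq_of_lt (show a + ((v + t) % n - a) < n by omega)]
      omega
    have := mod_cancel_aux e.symm
    rw [Nat.mod_eq_of_lt hv] at this
    exact this

theorem complement_and_cut_consecutiveOnes {ρ γ : Type*} {n : ℕ}
    (σ : γ ≃ Fin n) (M : ρ → γ → Prop) (hM : IsCircularOnesOrdering σ M) (c : γ) :
    ∀ r, ∃ a l : ℕ, ∀ x : {y : γ // y ≠ c},
      Xor' (M r x.1) (M r c) ↔
        (a ≤ ((σ x.1 : ℕ) + (n - 1) - (σ c : ℕ)) % n ∧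
          ((σ x.1 : ℕ) + (n - 1) - (σ c : ℕ)) % n < a + l) := by
  intro r
  obtain ⟨a, l, hrow⟩ := hM r
  have hn : 0 < n := Nat.pos_of_ne_zero (by rintro rfl; exact (σ c).elim0)
  set k := (σ c : ℕ) with hkdef
  have hk : k < n := (σ c).isLt
  set l' := min l n with hl'def
  have hl' : l' ≤ n := min_le_right _ _
  have hrow' : ∀ x : γ, M r x ↔ ∃ j < l', (σ x : ℕ) = (a + j) % n := fun x =>
    (hrow x).trans (arc_min_aux hn a l _ (σ x).isLt)
  by_cases hc : M r c
  · have hkin : ∃ j < l', k = (a + j) % n := (hrow' c).mp hc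
    have hknot : ¬ ∃ j < n - l', k = (a + l' + j) % n := fun h =>
      ((arc_compl_aux hn a l' hl' k hk).mpr h) hkin
    obtain ⟨a₀, ha₀⟩ := arc_cut_aux hn (a + l') (n - l') k hk hknot
    refine ⟨a₀, n - l', fun x => ?_⟩
    have hmx : Xor' (M r x.1) (M r c) ↔ ¬ M r x.1 := by simp [Xor', xor_def, hc]
    exact hmx.trans ((not_congr (hrow' x.1)).trans
      ((arc_compl_aux hn a l' hl' _ (σ x.1).isLt).trans (ha₀ _ (σ x.1).isLt)))
  · have hknot : ¬ ∃ j < l', k = (a + j) % n := fun h => hc ((hrow' c).mpr h)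
    obtain ⟨a₀, ha₀⟩ := arc_cut_aux hn a l' k hk hknot
    refine ⟨a₀, l', fun x => ?_⟩
    have hmx : Xor' (M r x.1) (M r c) ↔ M r x.1 := by simp [Xor', xor_def, hc]
    exact hmx.trans ((hrow' x.1).trans (ha₀ _ (σ x.1).isLt))
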